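/- Let R be an integral domain, 𝔭 a prime ideal of R, and S an integral domain that is a module-finite ring extension of the localization R_𝔭. Then there exists a domain T that is a module-finite ring extension of R such that the localization T_𝔭 (i.e., T localized at the multiplicative set R ∖ 𝔭) is isomorphic to S as an R_𝔭-algebra. -/

import Mathlib

/-- Given a domain `R`, a prime `𝔭`, and a domain `S` module-finite over the localization
`R_𝔭`, there is a domain `T` module-finite over `R` whose localization at `R ∖ 𝔭` is `S`
(as an `R_𝔭`-algebra).  Here `T` is realized as an `R`-subalgebra of `S`, and the
conclusion that `T_𝔭 ≅ S` is expressed by saying that `S` is the localization of `T` at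
the image of the multiplicative set `R ∖ 𝔭`. -/
theorem unlocalize_module_finite_extension
    {R : Type*} [CommRing R] [IsDomain R] (𝔭 : Ideal R) [𝔭.IsPrime]
    {S : Type*} [CommRing S] [IsDomain S]
    [Algebra R S] [Algebra (Localization.AtPrime 𝔭) S]
    [IsScalarTower R (Localization.AtPrime 𝔭) S]
    (hinj : Function.Injective (algebraMap (Localization.AtPrime 𝔭) S))
    (hfin : Module.Finite (Localization.AtPrime 𝔭) S) :
    ∃ T : Subalgebra R S, Module.Finite R T ∧
      IsLocalization (Submonoid.map (algebraMap R T) 𝔭.primeCompl) S := by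
  classical
  set K := Localization.AtPrime 𝔭
  obtain ⟨s, hs⟩ : (⊤ : Submodule K S).FG := hfin.fg_top
  -- Lemma A : every element of S has a "denominator" clearing it into the R-span of s
  have lemA : ∀ x : S, ∃ c : 𝔭.primeCompl, (c : R) • x ∈ Submodule.span R (s : Set S) := by
    intro x
    have hx : x ∈ Submodule.span K (s : Set S) := by rw [hs]; trivial
    induction hx using Submodule.span_induction with
    | mem g hg => exact ⟨1, by simpa using Submodule.subset_span hg⟩
    | zero => exact ⟨1, by simp⟩
    | add x y hx hy ihx ihy =>
        obtain ⟨c, hc⟩ := ihx; obtain ⟨e, he⟩ := ihy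
        refine ⟨c * e, ?_⟩
        rw [smul_add]
        refine Submodule.add_mem _ ?_ ?_
        · rw [Submonoid.coe_mul, mul_comm, mul_smul]
          exact Submodule.smul_mem _ _ hc
        · rw [Submonoid.coe_mul, mul_smul]
          exact Submodule.smul_mem _ _ he
    | smul a x hx ih =>
        obtain ⟨c, hc⟩ := ih
        obtain ⟨⟨r, u⟩, hru⟩ := IsLocalization.mk'_surjective 𝔭.primeCompl a
        refine ⟨u * c, ?_⟩
        have h1 : ((u * c : 𝔭.primeCompl) : R) • (a • x) = r • ((c : R) • x) := by
          rw [Submonoid.coe_mul, mul_smul, ← algebraMap_smul K (c : R) (a • x), ← mul_smul,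
            mul_comm, mul_smul, algebraMap_smul, ← algebraMap_smul K (u : R),
            ← mul_smul, ← hru, IsLocalization.mk'_spec', algebraMap_smul]
        rw [h1]
        exact Submodule.smul_mem _ _ hc
  -- common denominator for finitely many elements
  have main : ∀ F : Finset S, ∃ d : 𝔭.primeCompl,
      ∀ x ∈ F, (d : R) • x ∈ Submodule.span R (s : Set S) := by
    intro F
    induction F using Finset.induction with
    | empty => exact ⟨1, by simp⟩
    | insert _ _ ha ih =>
        obtain ⟨d, hd⟩ := ih
        obtain ⟨c, hc⟩ := lemA _
        refine ⟨c * d, ?_⟩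
        intro x hx
        rcases Finset.mem_insert.mp hx with rfl | hx
        · rw [Submonoid.coe_mul, mul_comm, mul_smul]
          exact Submodule.smul_mem _ _ hc
        · rw [Submonoid.coe_mul, mul_smul]
          exact Submodule.smul_mem _ _ (hd x hx)
  obtain ⟨d, hd⟩ := main (Finset.image (fun q : S × S => q.1 * q.2) (s ×ˢ s))
  have hd' : ∀ g ∈ s, ∀ g' ∈ s, (d : R) • (g * g') ∈ Submodule.span R (s : Set S) := by
    intro g hg g' hg'
    exact hd _ (Finset.mem_image.mpr ⟨(g, g'), Finset.mem_product.mpr ⟨hg, hg'⟩, rfl⟩)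
  set gens' : Set S := (fun g => (d : R) • g) '' (s : Set S) with hgens'
  set p : Submodule R S := Submodule.span R (insert (1 : S) gens') with hp
  have h_one : (1 : S) ∈ p := Submodule.subset_span (Set.mem_insert _ _)
  -- scaling by d sends the R-span of s into p
  have hdd : ∀ x ∈ Submodule.span R (s : Set S), (d : R) • x ∈ p := by
    intro x hx
    induction hx using Submodule.span_induction with
    | mem g hg =>
        exact Submodule.subset_span (Set.mem_insert_iff.mpr (Or.inr ⟨g, hg, rfl⟩))
    | zero => simpa using p.zero_mem
    | add x y hx hy ihx ihy => rw [smul_add]; exact p.add_mem ihx ihy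
    | smul r x hx ih => rw [smul_comm]; exact p.smul_mem _ ih
  have h_mul : ∀ x y, x ∈ p → y ∈ p → x * y ∈ p := by
    intro x y hx hy
    induction hx using Submodule.span_induction with
    | mem a ha =>
        induction hy using Submodule.span_induction with
        | mem b hb =>
            rcases Set.mem_insert_iff.mp ha with rfl | ⟨g, hg, rfl⟩
            · rw [one_mul]; exact Submodule.subset_span hb
            · rcases Set.mem_insert_iff.mp hb with rfl | ⟨g', hg', rfl⟩
              · rw [mul_one]
                exact Submodule.subset_span (Set.mem_insert_iff.mpr (Or.inr ⟨g, hg, rfl⟩))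
              · have : ((d : R) • g) * ((d : R) • g') = (d : R) • ((d : R) • (g * g')) := by
                  rw [smul_mul_assoc, mul_smul_comm, smul_comm]
                rw [this]
                exact hdd _ (hd' g hg g' hg')
        | zero => simpa using p.zero_mem
        | add b c hb hc ihb ihc => rw [mul_add]; exact p.add_mem ihb ihc
        | smul r b hb ih => rw [mul_smul_comm]; exact p.smul_mem _ ih
    | zero => simpa using p.zero_mem
    | add a b ha hb iha ihb => rw [add_mul]; exact p.add_mem iha ihb
    | smul r a ha ih => rw [smul_mul_assoc]; exact p.smul_mem _ ih
  refine ⟨p.toSubalgebra h_one h_mul, ?_, ?_⟩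
  · have hfin' : (insert (1 : S) gens').Finite :=
      Set.Finite.insert _ (s.finite_toSet.image _)
    exact Module.Finite.span_of_finite R hfin'
  · set T : Subalgebra R S := p.toSubalgebra h_one h_mul with hT
    constructor
    constructor
    · rintro ⟨y, c, hc, rfl⟩
      have h1 : algebraMap T S (algebraMap R T c) = algebraMap K S (algebraMap R K c) := by
        rw [← IsScalarTower.algebraMap_apply, IsScalarTower.algebraMap_apply R K S]
      rw [h1]
      exact (IsLocalization.map_units K (⟨c, hc⟩ : 𝔭.primeCompl)).map (algebraMap K S)
    · intro z
      obtain ⟨c, hc⟩ := lemA z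
      have hmem : ((d * c : 𝔭.primeCompl) : R) • z ∈ p := by
        rw [Submonoid.coe_mul, mul_smul]
        exact hdd _ hc
      refine ⟨⟨⟨_, hmem⟩, ⟨algebraMap R T ((d * c : 𝔭.primeCompl) : R),
        ⟨((d * c : 𝔭.primeCompl) : R), (d * c).2, rfl⟩⟩⟩, ?_⟩
      show z * algebraMap T S (algebraMap R T _) = _
      rw [← IsScalarTower.algebraMap_apply]
      rw [mul_comm, ← Algebra.smul_def]
      rfl
    · intro x y h
      refine ⟨1, ?_⟩
      have : x = y := Subtype.ext h
      rw [this]
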